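/- Let q ≥ 0 be an even integer, let l, l' be integers with 0 ≤ l, l' ≤ q/2, and let d_1, d_2, d_3, d_4 be nonnegative integers satisfying d_1 + d_2 = q − 2l, d_3 + d_4 = 2l, d_1 + d_3 = q − 2l', d_2 + d_4 = 2l'. Then |b_{q−2l} · a_{2l} · b_{q−2l'} · a_{2l'}| · (q−2l)! (2l)! (q−2l')! (2l')! / (d_1! d_2! d_3! d_4!) ≤ 4^q. -/

import Mathlib

set_option autoImplicit false

open Real

lemma myCbLe (k : ℕ) : k.centralBinom ≤ 4 ^ k := by
  have h : (2*k).choose k ≤ ∑ i ∈ Finset.range (2*k+1), (2*k).choose i :=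
    Finset.single_le_sum (fun i _ => Nat.zero_le _) (Finset.mem_range.mpr (by omega))
  rw [Nat.sum_range_choose] at h
  calc k.centralBinom = (2*k).choose k := Nat.centralBinom_eq_two_mul_choose k
    _ ≤ 2 ^ (2*k) := h
    _ = 4 ^ k := by rw [pow_mul]; norm_num

lemma myFactTwoMul (k : ℕ) : (2*k).factorial = k.centralBinom * (k.factorial * k.factorial) := by
  have h := Nat.choose_mul_factorial_mul_factorial (show k ≤ 2*k by omega)
  rw [Nat.centralBinom_eq_two_mul_choose]
  rw [show 2*k - k = k from by omega] at h
  rw [← h]; ring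

lemma myFactTwoMulLe (k : ℕ) : (2*k).factorial ≤ 4 ^ k * (k.factorial * k.factorial) := by
  rw [myFactTwoMul]
  exact Nat.mul_le_mul_right _ (myCbLe k)

lemma myFourPowLe (k : ℕ) : 4 ^ k ≤ (2*k+1) * k.centralBinom := by
  rcases Nat.eq_zero_or_pos k with h | h
  · subst h; simp [Nat.centralBinom]
  · calc 4 ^ k ≤ 2 * k * k.centralBinom := Nat.four_pow_le_two_mul_self_mul_centralBinom k h
      _ ≤ (2*k+1) * k.centralBinom := Nat.mul_le_mul_right _ (by omega)

lemma mySqFactLe (k d₁ d₂ : ℕ) (h : d₁ + d₂ = 2*k) :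
    k.factorial * k.factorial ≤ (2*k+1) * (d₁.factorial * d₂.factorial) := by
  have h2 : (2*k).factorial = (2*k).choose d₁ * (d₁.factorial * d₂.factorial) := by
    have h' := Nat.choose_mul_factorial_mul_factorial (show d₁ ≤ 2*k by omega)
    rw [show 2*k - d₁ = d₂ from by omega] at h'
    rw [← h']; ring
  have h3 : (2*k).choose d₁ ≤ 4 ^ k := le_trans (Nat.choose_le_centralBinom d₁ k) (myCbLe k)
  have key : 4 ^ k * (k.factorial * k.factorial)
      ≤ 4 ^ k * ((2*k+1) * (d₁.factorial * d₂.factorial)) := by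
    calc 4 ^ k * (k.factorial * k.factorial)
        ≤ ((2*k+1) * k.centralBinom) * (k.factorial * k.factorial) :=
          Nat.mul_le_mul_right _ (myFourPowLe k)
      _ = (2*k+1) * (2*k).factorial := by rw [myFactTwoMul]; ring
      _ = (2*k+1) * ((2*k).choose d₁ * (d₁.factorial * d₂.factorial)) := by rw [h2]
      _ ≤ (2*k+1) * (4 ^ k * (d₁.factorial * d₂.factorial)) := by
          exact Nat.mul_le_mul_left _ (Nat.mul_le_mul_right _ h3)
      _ = 4 ^ k * ((2*k+1) * (d₁.factorial * d₂.factorial)) := by ring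
  exact Nat.le_of_mul_le_mul_left key (by positivity)

lemma mySqSuccLe (q : ℕ) : (q+1)^2 ≤ 4 * 2 ^ q := by
  induction q with
  | zero => norm_num
  | succ n ih =>
    rcases Nat.lt_or_ge n 2 with h | h
    · interval_cases n <;> norm_num
    · have h' : (n+1+1)^2 ≤ 2 * (n+1)^2 := by nlinarith
      calc (n+1+1)^2 ≤ 2 * (n+1)^2 := h'
        _ ≤ 2 * (4 * 2 ^ n) := by omega
        _ = 4 * 2 ^ (n+1) := by ring

/-- `a_{2l} = √(2/π)·(−1)^{l+1}/(2^l·l!·(2l−1))`, indexed by `l`. -/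
noncomputable def aCoef (l : ℕ) : ℝ :=
  Real.sqrt (2 / π) * (-1 : ℝ) ^ (l + 1) / (2 ^ l * (Nat.factorial l) * (2 * (l : ℝ) - 1))

/-- `b_{2k} = (−1)^k/(√(2π)·2^k·k!)`, indexed by `k`. -/
noncomputable def bCoef (k : ℕ) : ℝ :=
  (-1 : ℝ) ^ k / (Real.sqrt (2 * π) * 2 ^ k * (Nat.factorial k))

lemma myAbsB (k : ℕ) : |bCoef k| ≤ 1 / (2 * 2 ^ k * (k.factorial : ℝ)) := by
  have hpi : (2 : ℝ) ≤ Real.sqrt (2 * π) := by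
    nlinarith [Real.sq_sqrt (show (0:ℝ) ≤ 2*π by positivity), Real.sqrt_nonneg (2*π),
      Real.pi_gt_three]
  have hden : (0:ℝ) < 2 * 2 ^ k * (k.factorial : ℝ) := by positivity
  rw [bCoef, abs_div, abs_pow, abs_neg, abs_one, one_pow]
  rw [abs_of_pos (by positivity : (0:ℝ) < Real.sqrt (2*π) * 2 ^ k * (k.factorial : ℝ))]
  apply div_le_div_of_nonneg_left (by norm_num) hden
  gcongr

lemma myAbsA (l : ℕ) : |aCoef l| ≤ 1 / (2 ^ l * (l.factorial : ℝ)) := by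
  have hnum : |Real.sqrt (2 / π) * (-1 : ℝ) ^ (l + 1)| ≤ 1 := by
    rw [abs_mul, abs_pow, abs_neg, abs_one, one_pow, mul_one,
      abs_of_nonneg (Real.sqrt_nonneg _)]
    have h1 : Real.sqrt (2 / π) ≤ Real.sqrt 1 := by
      apply Real.sqrt_le_sqrt
      rw [div_le_one Real.pi_pos]
      linarith [Real.pi_gt_three]
    simpa using h1
  have habs1 : (1:ℝ) ≤ |2 * (l : ℝ) - 1| := by
    rcases Nat.eq_zero_or_pos l with h | h
    · subst h; norm_num
    · have h1 : (1:ℝ) ≤ (l:ℝ) := by exact_mod_cast h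
      rw [abs_of_nonneg (by linarith)]
      linarith
  have hden : (0:ℝ) < 2 ^ l * (l.factorial : ℝ) := by positivity
  rw [aCoef, abs_div]
  rw [show |(2:ℝ) ^ l * (Nat.factorial l : ℝ) * (2 * (l:ℝ) - 1)|
      = (2 ^ l * (Nat.factorial l : ℝ)) * |2 * (l:ℝ) - 1| by
    rw [abs_mul, abs_of_pos hden]]
  calc |Real.sqrt (2 / π) * (-1 : ℝ) ^ (l + 1)| / ((2 ^ l * (Nat.factorial l : ℝ)) * |2 * (l:ℝ) - 1|)
      ≤ 1 / ((2 ^ l * (Nat.factorial l : ℝ)) * 1) :=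
        div_le_div₀ (by norm_num) hnum (by positivity)
          (mul_le_mul_of_nonneg_left habs1 hden.le)
    _ = 1 / (2 ^ l * (l.factorial : ℝ)) := by rw [mul_one]

theorem coefficient_factorial_bound (q l l' d₁ d₂ d₃ d₄ : ℕ) (hq : Even q)
    (hl : l ≤ q / 2) (hl' : l' ≤ q / 2)
    (h12 : d₁ + d₂ = q - 2 * l) (h34 : d₃ + d₄ = 2 * l)
    (h13 : d₁ + d₃ = q - 2 * l') (h24 : d₂ + d₄ = 2 * l') :
    |bCoef (q / 2 - l) * aCoef l * bCoef (q / 2 - l') * aCoef l'| *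
      (((q - 2 * l).factorial * (2 * l).factorial
          * (q - 2 * l').factorial * (2 * l').factorial : ℕ) : ℝ) /
      (((d₁.factorial * d₂.factorial * d₃.factorial * d₄.factorial : ℕ)) : ℝ)
    ≤ 4 ^ q := by
  obtain ⟨m, hm⟩ := hq
  set k := q / 2 - l with hkdef
  set k' := q / 2 - l' with hkdef'
  have hql : q - 2 * l = 2 * k := by omega
  have hql' : q - 2 * l' = 2 * k' := by omega
  rw [hql, hql']
  have f1 : k.factorial * k.factorial ≤ (q+1) * (d₁.factorial * d₂.factorial) :=
    (mySqFactLe k d₁ d₂ (by omega)).trans (Nat.mul_le_mul_right _ (by omega))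
  have f2 : l.factorial * l.factorial ≤ (q+1) * (d₃.factorial * d₄.factorial) :=
    (mySqFactLe l d₃ d₄ (by omega)).trans (Nat.mul_le_mul_right _ (by omega))
  have f3 : k'.factorial * k'.factorial ≤ (q+1) * (d₁.factorial * d₃.factorial) :=
    (mySqFactLe k' d₁ d₃ (by omega)).trans (Nat.mul_le_mul_right _ (by omega))
  have f4 : l'.factorial * l'.factorial ≤ (q+1) * (d₂.factorial * d₄.factorial) :=
    (mySqFactLe l' d₂ d₄ (by omega)).trans (Nat.mul_le_mul_right _ (by omega))
  have hF2 : (k.factorial * l.factorial * k'.factorial * l'.factorial)^2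
      ≤ ((q+1)^2 * (d₁.factorial * d₂.factorial * d₃.factorial * d₄.factorial))^2 := by
    calc (k.factorial * l.factorial * k'.factorial * l'.factorial)^2
        = ((k.factorial * k.factorial) * (l.factorial * l.factorial)) *
          ((k'.factorial * k'.factorial) * (l'.factorial * l'.factorial)) := by ring
      _ ≤ (((q+1) * (d₁.factorial * d₂.factorial)) * ((q+1) * (d₃.factorial * d₄.factorial))) *
          (((q+1) * (d₁.factorial * d₃.factorial)) * ((q+1) * (d₂.factorial * d₄.factorial))) :=
          Nat.mul_le_mul (Nat.mul_le_mul f1 f2) (Nat.mul_le_mul f3 f4)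
      _ = ((q+1)^2 * (d₁.factorial * d₂.factorial * d₃.factorial * d₄.factorial))^2 := by ring
  have hF : k.factorial * l.factorial * k'.factorial * l'.factorial
      ≤ (q+1)^2 * (d₁.factorial * d₂.factorial * d₃.factorial * d₄.factorial) :=
    (Nat.pow_le_pow_iff_left (by norm_num : (2:ℕ) ≠ 0)).mp hF2
  have hN : (2*k).factorial * (2*l).factorial * (2*k').factorial * (2*l').factorial
      ≤ 4^q * ((k.factorial * l.factorial * k'.factorial * l'.factorial) *
        ((q+1)^2 * (d₁.factorial * d₂.factorial * d₃.factorial * d₄.factorial))) := by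
    calc (2*k).factorial * (2*l).factorial * (2*k').factorial * (2*l').factorial
        ≤ (4^k * (k.factorial * k.factorial)) * (4^l * (l.factorial * l.factorial)) *
          (4^k' * (k'.factorial * k'.factorial)) * (4^l' * (l'.factorial * l'.factorial)) :=
          Nat.mul_le_mul (Nat.mul_le_mul (Nat.mul_le_mul (myFactTwoMulLe k) (myFactTwoMulLe l))
            (myFactTwoMulLe k')) (myFactTwoMulLe l')
      _ = 4^(k+l+k'+l') * ((k.factorial * l.factorial * k'.factorial * l'.factorial) *
            (k.factorial * l.factorial * k'.factorial * l'.factorial)) := by ring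
      _ = 4^q * ((k.factorial * l.factorial * k'.factorial * l'.factorial) *
            (k.factorial * l.factorial * k'.factorial * l'.factorial)) := by
          rw [show k+l+k'+l' = q from by omega]
      _ ≤ 4^q * ((k.factorial * l.factorial * k'.factorial * l'.factorial) *
            ((q+1)^2 * (d₁.factorial * d₂.factorial * d₃.factorial * d₄.factorial))) :=
          Nat.mul_le_mul_left _ (Nat.mul_le_mul_left _ hF)
  have hBle : |bCoef k * aCoef l * bCoef k' * aCoef l'|
      ≤ 1 / (4 * 2^q * ((k.factorial * l.factorial * k'.factorial * l'.factorial : ℕ) : ℝ)) := by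
    rw [abs_mul, abs_mul, abs_mul]
    have c1 : (0:ℝ) < (k.factorial : ℝ) := by positivity
    have c2 : (0:ℝ) < (l.factorial : ℝ) := by positivity
    have c3 : (0:ℝ) < (k'.factorial : ℝ) := by positivity
    have c4 : (0:ℝ) < (l'.factorial : ℝ) := by positivity
    calc |bCoef k| * |aCoef l| * |bCoef k'| * |aCoef l'|
        ≤ (1 / (2 * 2^k * (k.factorial : ℝ))) * (1 / (2^l * (l.factorial : ℝ))) *
          (1 / (2 * 2^k' * (k'.factorial : ℝ))) * (1 / (2^l' * (l'.factorial : ℝ))) := by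
          gcongr
          · exact myAbsB k
          · exact myAbsA l
          · exact myAbsB k'
          · exact myAbsA l'
      _ = 1 / (4 * 2^q * ((k.factorial * l.factorial * k'.factorial * l'.factorial : ℕ) : ℝ)) := by
          rw [show q = k+l+k'+l' from by omega]
          push_cast
          rw [pow_add, pow_add, pow_add]
          field_simp
          ring
  have hDpos : (0:ℝ) < ((d₁.factorial * d₂.factorial * d₃.factorial * d₄.factorial : ℕ) : ℝ) := by
    positivity
  have hFpos : (0:ℝ) < ((k.factorial * l.factorial * k'.factorial * l'.factorial : ℕ) : ℝ) := by
    positivity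
  have hNr : (((2*k).factorial * (2*l).factorial * (2*k').factorial * (2*l').factorial : ℕ) : ℝ)
      ≤ (4:ℝ)^q * (((k.factorial * l.factorial * k'.factorial * l'.factorial : ℕ) : ℝ) *
        (((q:ℝ)+1)^2 * ((d₁.factorial * d₂.factorial * d₃.factorial * d₄.factorial : ℕ) : ℝ))) := by
    have := hN
    push_cast
    exact_mod_cast this
  calc |bCoef k * aCoef l * bCoef k' * aCoef l'| *
        (((2*k).factorial * (2*l).factorial * (2*k').factorial * (2*l').factorial : ℕ) : ℝ) /
        ((d₁.factorial * d₂.factorial * d₃.factorial * d₄.factorial : ℕ) : ℝ)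
      ≤ (1 / (4 * 2^q * ((k.factorial * l.factorial * k'.factorial * l'.factorial : ℕ) : ℝ))) *
        ((4:ℝ)^q * (((k.factorial * l.factorial * k'.factorial * l'.factorial : ℕ) : ℝ) *
          (((q:ℝ)+1)^2 * ((d₁.factorial * d₂.factorial * d₃.factorial * d₄.factorial : ℕ) : ℝ)))) /
        ((d₁.factorial * d₂.factorial * d₃.factorial * d₄.factorial : ℕ) : ℝ) := by
        gcongr
    _ = ((q:ℝ)+1)^2 / (4 * 2^q) * 4^q := by
        field_simp
    _ ≤ 1 * 4^q := by
        gcongr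
        rw [div_le_one (by positivity)]
        exact_mod_cast mySqSuccLe q
    _ = 4^q := one_mul _
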